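/- Let g be an entire (holomorphic) function on ℂⁿ satisfying the growth bound |g(z)| ≤ C e^{(ν/2)|z|²} for some constant C and all z. Then g satisfies the Bargmann–Fock reproducing formula: g(z) = (ν/π)ⁿ ∫_{ℂⁿ} e^{ν⟨z,w⟩} g(w) e^{−ν|w|²} dm(w) for every z ∈ ℂⁿ. -/

import Mathlib

open MeasureTheory Complex

noncomputable section

/-- Hermitian form ⟨z,w⟩ = ∑ zⱼ conj(wⱼ) on ℂⁿ. -/
def herm {n : ℕ} (z w : Fin n → ℂ) : ℂ := ∑ j, z j * (starRingEnd ℂ) (w j)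

/-- Symplectic form ω(z,w) = Im⟨z,w⟩. -/
def symp {n : ℕ} (z w : Fin n → ℂ) : ℝ := (herm z w).im

/-- Squared Euclidean norm |z|². -/
def absq {n : ℕ} (z : Fin n → ℂ) : ℝ := ∑ j, Complex.normSq (z j)


open Real Set Filter


lemma int_aux1 (B a : ℝ) (ha : a < 0) :
    IntegrableOn (fun r : ℝ => r * Real.exp (B * r + a * r ^ 2)) (Set.Ioi 0) := by
  apply integrable_of_isBigO_exp_neg (b := 1) one_pos
  · fun_prop
  · have t1 : Tendsto (fun r : ℝ => r * Real.exp (-r)) atTop (nhds 0) := by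
      simpa using tendsto_pow_mul_exp_neg_atTop_nhds_zero 1
    have t2 : Tendsto (fun r : ℝ => (B + 2) * r + a * r ^ 2) atTop atBot := by
      have h2 : Tendsto (fun r : ℝ => r * (a * r + (B + 2))) atTop atBot := by
        apply Filter.Tendsto.atTop_mul_atBot₀ tendsto_id
        apply Filter.tendsto_atBot_add_const_right
        exact (tendsto_const_mul_atBot_of_neg ha).2 tendsto_id
      refine h2.congr' (Eventually.of_forall fun r => by ring)
    have t3 : Tendsto (fun r : ℝ => Real.exp ((B + 2) * r + a * r ^ 2)) atTop (nhds 0) :=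
      Real.tendsto_exp_atBot.comp t2
    have t4 : Tendsto (fun r : ℝ =>
        (r * Real.exp (-r)) * Real.exp ((B + 2) * r + a * r ^ 2)) atTop (nhds 0) := by
      simpa using t1.mul t3
    have heq : ∀ r : ℝ, (r * Real.exp (B * r + a * r ^ 2)) / Real.exp (-1 * r)
        = (r * Real.exp (-r)) * Real.exp ((B + 2) * r + a * r ^ 2) := by
      intro r
      rw [mul_div_assoc, ← Real.exp_sub, mul_assoc, ← Real.exp_add]
      congr 1
      ring
    have t5 : Tendsto (fun r : ℝ =>
        (r * Real.exp (B * r + a * r ^ 2)) / Real.exp (-1 * r)) atTop (nhds 0) := by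
      simpa only [heq] using t4
    exact (Asymptotics.isLittleO_iff_tendsto fun x hx =>
      absurd hx (Real.exp_ne_zero _)).2 t5 |>.isBigO

lemma int_aux2 (B a : ℝ) (ha : a < 0) :
    Integrable (fun w : ℂ => Real.exp (B * ‖w‖ + a * ‖w‖ ^ 2)) := by
  have hkey : Integrable (fun v : ℂ => Real.exp ((a / 2) * ‖v‖ ^ 2)) := by
    have h1 := (GaussianFourier.integrable_cexp_neg_mul_sq_norm_add (V := ℂ)
      (b := (-(a / 2) : ℂ)) (by simp; linarith) 0 0).norm
    apply h1.congr (Eventually.of_forall fun v => ?_)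
    simp [Complex.norm_exp, ← Complex.ofReal_pow, ← Complex.ofReal_mul]
  have hbound : ∀ w : ℂ, B * ‖w‖ + a * ‖w‖ ^ 2 ≤ B ^ 2 / (-(2 * a)) + (a / 2) * ‖w‖ ^ 2 := by
    intro w
    have h2a : (0:ℝ) < -(2 * a) := by linarith
    have ha' : a ≠ 0 := ne_of_lt ha
    rw [← sub_nonneg]
    have key : B ^ 2 / (-(2 * a)) + (a / 2) * ‖w‖ ^ 2 - (B * ‖w‖ + a * ‖w‖ ^ 2)
        = (B + a * ‖w‖) ^ 2 / (-(2 * a)) := by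
      rw [eq_div_iff h2a.ne']
      field_simp
      ring
    rw [key]
    positivity
  refine (hkey.const_mul (Real.exp (B ^ 2 / (-(2 * a))))).mono' ((Real.continuous_exp.comp (by fun_prop)).aestronglyMeasurable)
    (Eventually.of_forall fun w => ?_)
  rw [Real.norm_eq_abs, _root_.abs_of_nonneg (Real.exp_nonneg _), ← Real.exp_add]
  exact Real.exp_le_exp.2 (hbound w)

lemma circle_avg (h : ℂ → ℂ) (hd : Differentiable ℂ h) {r : ℝ} (hr : 0 < r) :
    ∫ θ in (0:ℝ)..2*π, h (circleMap 0 r θ) = 2 * π * h 0 := by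
  have hdc : DiffContOnCl ℂ h (Metric.ball 0 r) :=
    hd.diffContOnCl
  have key := hdc.circleIntegral_sub_inv_smul (Metric.mem_ball_self hr)
  simp only [circleIntegral, deriv_circleMap, smul_eq_mul, sub_zero] at key
  have heq : ∀ θ : ℝ, circleMap 0 r θ * I * ((circleMap 0 r θ)⁻¹ * h (circleMap 0 r θ))
      = I * h (circleMap 0 r θ) := by
    intro θ
    have hne : circleMap 0 r θ ≠ 0 := circleMap_ne_center hr.ne'
    field_simp
  rw [intervalIntegral.integral_congr (g := fun θ => I * h (circleMap 0 r θ))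
    (fun θ _ => heq θ), intervalIntegral.integral_const_mul] at key
  apply mul_left_cancel₀ Complex.I_ne_zero
  rw [key]
  ring


lemma mean1 (ν A B C : ℝ) (hν : 0 < ν) (hA : A < ν) (h : ℂ → ℂ) (hd : Differentiable ℂ h)
    (hb : ∀ w, ‖h w‖ ≤ C * Real.exp (B * ‖w‖ + A * ‖w‖ ^ 2)) :
    ∫ w : ℂ, h w * ((Real.exp (-ν * ‖w‖ ^ 2) : ℝ) : ℂ) = ((π / ν : ℝ) : ℂ) * h 0 := by
  set f : ℂ → ℂ := fun w => h w * ((Real.exp (-ν * ‖w‖ ^ 2) : ℝ) : ℂ) with hf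
  -- the polar-coordinate transformed function
  set F : ℝ × ℝ → ℂ := fun p => p.1 • f (Complex.polarCoord.symm p) with hF
  have hsymm_cm : ∀ p : ℝ × ℝ, Complex.polarCoord.symm p = circleMap 0 p.1 p.2 := by
    intro p
    simp [Complex.polarCoord_symm_apply, circleMap, Complex.exp_mul_I,
      Complex.ofReal_cos, Complex.ofReal_sin]
  have hnorm_symm : ∀ p : ℝ × ℝ, ‖Complex.polarCoord.symm p‖ = |p.1| := by
    intro p
    rw [Complex.norm_polarCoord_symm]
  have hcont : Continuous F := by
    have hfc : Continuous f := by
      apply hd.continuous.mul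
      exact Complex.continuous_ofReal.comp (Real.continuous_exp.comp (by fun_prop))
    simp only [hF, hsymm_cm]
    apply continuous_fst.smul (hfc.comp ?_)
    unfold circleMap
    fun_prop
  -- domination
  have hC : 0 ≤ C := by
    have := (norm_nonneg (h 0)).trans (hb 0)
    simpa using this
  set G : ℝ × ℝ → ℝ := fun p => (C * (|p.1| * Real.exp (B * |p.1| + (A - ν) * p.1 ^ 2))) * 1
    with hG
  have hFG : ∀ p : ℝ × ℝ, ‖F p‖ ≤ G p := by
    intro p
    have h1 : ‖F p‖ = |p.1| * (‖h (Complex.polarCoord.symm p)‖ * Real.exp (-ν * p.1 ^ 2)) := by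
      rw [hF, norm_smul, Real.norm_eq_abs, hf, norm_mul, Complex.norm_real, Real.norm_eq_abs,
        _root_.abs_of_nonneg (Real.exp_nonneg _), hnorm_symm, _root_.sq_abs]
    have h2 : ‖h (Complex.polarCoord.symm p)‖ ≤ C * Real.exp (B * |p.1| + A * p.1 ^ 2) := by
      have := hb (Complex.polarCoord.symm p)
      rwa [hnorm_symm, _root_.sq_abs] at this
    rw [h1, hG]
    calc |p.1| * (‖h (Complex.polarCoord.symm p)‖ * Real.exp (-ν * p.1 ^ 2))
        ≤ |p.1| * ((C * Real.exp (B * |p.1| + A * p.1 ^ 2)) * Real.exp (-ν * p.1 ^ 2)) := by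
          gcongr
      _ = (C * (|p.1| * Real.exp (B * |p.1| + (A - ν) * p.1 ^ 2))) * 1 := by
          rw [mul_one, mul_assoc C, ← Real.exp_add,
            show B * |p.1| + A * p.1 ^ 2 + -ν * p.1 ^ 2
              = B * |p.1| + (A - ν) * p.1 ^ 2 by ring]
          ring
  have hGint : Integrable G ((volume.restrict (Ioi (0:ℝ))).prod
      (volume.restrict (Ioo (-π) π))) := by
    have hu : IntegrableOn (fun r : ℝ => C * (|r| * Real.exp (B * |r| + (A - ν) * r ^ 2)))
        (Ioi (0:ℝ)) := by
      have base := (int_aux1 B (A - ν) (by linarith)).const_mul C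
      apply IntegrableOn.congr_fun base ?_ measurableSet_Ioi
      intro r hr
      simp only [_root_.abs_of_pos (show (0:ℝ) < r from hr)]
    have hv : IntegrableOn (fun _ : ℝ => (1:ℝ)) (Ioo (-π) π) :=
      integrableOn_const measure_Ioo_lt_top.ne
    exact hu.mul_prod hv
  have hFint : Integrable F ((volume.restrict (Ioi (0:ℝ))).prod
      (volume.restrict (Ioo (-π) π))) :=
    hGint.mono' hcont.aestronglyMeasurable (Eventually.of_forall hFG)
  -- main computation
  rw [← Complex.integral_comp_polarCoord_symm f,
    show polarCoord.target = Ioi (0:ℝ) ×ˢ Ioo (-π) π from rfl]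
  rw [show (volume : Measure (ℝ × ℝ)).restrict (Ioi (0:ℝ) ×ˢ Ioo (-π) π)
      = (volume.restrict (Ioi (0:ℝ))).prod (volume.restrict (Ioo (-π) π)) by
    rw [Measure.volume_eq_prod, Measure.prod_restrict]]
  rw [MeasureTheory.integral_prod _ hFint]
  -- inner integral
  have hinner : ∀ r ∈ Ioi (0:ℝ),
      (∫ θ in Ioo (-π) π, F (r, θ)) =
        ((r * Real.exp (-ν * r ^ 2) : ℝ) : ℂ) * (2 * (π:ℝ) * h 0) := by
    intro r hr
    have hr' : (0:ℝ) < r := hr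
    have hFrθ : ∀ θ : ℝ, F (r, θ)
        = ((r * Real.exp (-ν * r ^ 2) : ℝ) : ℂ) * h (circleMap 0 r θ) := by
      intro θ
      rw [hF]
      simp only [hf, hsymm_cm]
      have : ‖circleMap 0 r θ‖ = r := by
        rw [← hsymm_cm (r, θ), hnorm_symm, _root_.abs_of_pos hr']
      rw [this]
      push_cast
      simp [smul_eq_mul]
      ring
    simp only [hFrθ]
    rw [MeasureTheory.integral_const_mul]
    congr 1
    -- ∫ θ in Ioo (-π) π, h (circleMap 0 r θ) = 2π h 0
    rw [← MeasureTheory.integral_Ioc_eq_integral_Ioo,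
      ← intervalIntegral.integral_of_le (by linarith [Real.pi_pos])]
    have hper : Function.Periodic (fun θ => h (circleMap 0 r θ)) (2*π) :=
      (periodic_circleMap 0 r).comp h
    have := hper.intervalIntegral_add_eq (-π) 0
    rw [show -π + 2*π = π by ring, show (0:ℝ) + 2*π = 2*π by ring] at this
    rw [this]
    exact circle_avg h hd hr'
  rw [setIntegral_congr_fun measurableSet_Ioi hinner]
  -- outer integral
  have hsmul : ∀ r : ℝ, ((r * Real.exp (-ν * r ^ 2) : ℝ) : ℂ) * (2 * (π:ℝ) * h 0)
      = (r * Real.exp (-ν * r ^ 2)) • (2 * (π:ℝ) * h 0) := by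
    intro r; rw [Complex.real_smul]
  simp only [hsmul]
  rw [integral_smul_const]
  have hJ : ∫ r in Ioi (0:ℝ), r * Real.exp (-ν * r ^ 2) = 1 / (2 * ν) := by
    have hderiv : ∀ x ∈ Ioi (0:ℝ),
        HasDerivAt (fun r : ℝ => -(1/(2*ν)) * Real.exp (-ν * r ^ 2))
          (x * Real.exp (-ν * x ^ 2)) x := by
      intro x _
      have h1 : HasDerivAt (fun r : ℝ => -ν * r ^ 2) (-ν * (2 * x)) x := by
        simpa using ((hasDerivAt_pow 2 x).const_mul (-ν))
      have h2 := (h1.exp).const_mul (-(1/(2*ν)))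
      refine h2.congr_deriv ?_
      field_simp
    have hint : IntegrableOn (fun x : ℝ => x * Real.exp (-ν * x ^ 2)) (Ioi 0) := by
      have := int_aux1 0 (-ν) (by linarith)
      simpa using this
    have htend : Tendsto (fun r : ℝ => -(1/(2*ν)) * Real.exp (-ν * r ^ 2)) atTop (nhds 0) := by
      have t1 : Tendsto (fun r : ℝ => -ν * r ^ 2) atTop atBot :=
        (tendsto_const_mul_atBot_of_neg (by linarith)).2 (tendsto_pow_atTop two_ne_zero)
      have t2 := Real.tendsto_exp_atBot.comp t1
      simpa using t2.const_mul (-(1/(2*ν)))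
    have hcw : ContinuousWithinAt (fun r : ℝ => -(1/(2*ν)) * Real.exp (-ν * r ^ 2)) (Ici 0) 0 :=
      (continuous_const.mul (Real.continuous_exp.comp (continuous_const.mul (continuous_pow 2)))).continuousWithinAt
    have := MeasureTheory.integral_Ioi_of_hasDerivAt_of_tendsto
      hcw hderiv hint htend
    rw [this]
    norm_num
  rw [hJ]
  rw [Complex.real_smul]
  push_cast
  have hν' : (ν:ℂ) ≠ 0 := by exact_mod_cast hν.ne'
  field_simp




lemma absq_eq {n : ℕ} (w : Fin n → ℂ) : absq w = ∑ j, ‖w j‖ ^ 2 := by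
  simp [absq, Complex.normSq_eq_norm_sq]

lemma absq_cons {n : ℕ} (x : ℂ) (y : Fin n → ℂ) :
    absq (Fin.cons x y) = ‖x‖ ^ 2 + absq y := by
  simp [absq_eq, Fin.sum_univ_succ]

lemma sum_norm_cons {n : ℕ} (x : ℂ) (y : Fin n → ℂ) :
    ∑ j, ‖(Fin.cons x y : Fin (n + 1) → ℂ) j‖ = ‖x‖ + ∑ j, ‖y j‖ := by
  simp [Fin.sum_univ_succ]

lemma cons_diff {n : ℕ} (x : ℂ) :
    Differentiable ℂ (fun y : Fin n → ℂ => (Fin.cons x y : Fin (n + 1) → ℂ)) := by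
  rw [differentiable_pi]
  intro i
  refine Fin.cases ?_ ?_ i
  · simpa using differentiable_const x
  · intro j
    simp only [Fin.cons_succ]
    exact differentiable_pi.1 differentiable_id j

lemma cons_diff1 {n : ℕ} :
    Differentiable ℂ (fun x : ℂ => (Fin.cons x 0 : Fin (n + 1) → ℂ)) := by
  rw [differentiable_pi]
  intro i
  refine Fin.cases ?_ ?_ i
  · simpa using differentiable_id
  · intro j
    simp only [Fin.cons_succ]
    exact differentiable_const 0

lemma cons_zero_zero {n : ℕ} : (Fin.cons 0 0 : Fin (n + 1) → ℂ) = 0 := by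
  funext i
  refine Fin.cases ?_ ?_ i <;> simp

lemma meanN (ν A B : ℝ) (hν : 0 < ν) (hA : A < ν) :
    ∀ (n : ℕ) (C : ℝ) (h : (Fin n → ℂ) → ℂ), Differentiable ℂ h →
      (∀ w, ‖h w‖ ≤ C * Real.exp (B * ∑ j, ‖w j‖ + A * absq w)) →
      ∫ w : Fin n → ℂ, h w * ((Real.exp (-ν * absq w) : ℝ) : ℂ)
        = (((π / ν) ^ n : ℝ) : ℂ) * h 0 := by
  intro n
  induction n with
  | zero =>
    intro C h hd hb
    have h0 : (fun w : Fin 0 → ℂ => h w * ((Real.exp (-ν * absq w) : ℝ) : ℂ))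
        = fun _ => h 0 := by
      funext w
      rw [Subsingleton.elim w 0]
      simp [absq]
    rw [h0, integral_const]
    have : (volume : Measure (Fin 0 → ℂ)) univ = 1 := by
      rw [MeasureTheory.volume_pi, Measure.pi_univ]
      simp
    simp [this, Measure.real]
  | succ n IH =>
    intro C h hd hb
    have hC : 0 ≤ C := by
      have := (norm_nonneg (h 0)).trans (hb 0)
      simpa [absq] using this
    set F : (Fin (n + 1) → ℂ) → ℂ :=
      fun w => h w * ((Real.exp (-ν * absq w) : ℝ) : ℂ) with hF
    have hFcont : Continuous F := by
      apply hd.continuous.mul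
      apply Complex.continuous_ofReal.comp
      apply Real.continuous_exp.comp
      have : Continuous fun w : Fin (n + 1) → ℂ => absq w := by
        simp only [absq_eq]
        fun_prop
      fun_prop
    -- integrability
    have hFint : Integrable F := by
      have hdom : Integrable (fun w : Fin (n + 1) → ℂ =>
          C * ∏ j, Real.exp (B * ‖w j‖ + (A - ν) * ‖w j‖ ^ 2)) :=
        (Integrable.fintype_prod fun _ => int_aux2 B (A - ν) (by linarith)).const_mul C
      apply hdom.mono' hFcont.aestronglyMeasurable (Eventually.of_forall fun w => ?_)
      have h1 : ‖F w‖ = ‖h w‖ * Real.exp (-ν * absq w) := by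
        rw [hF, norm_mul, Complex.norm_real, Real.norm_eq_abs,
          _root_.abs_of_nonneg (Real.exp_nonneg _)]
      have h2 : ‖h w‖ * Real.exp (-ν * absq w)
          ≤ (C * Real.exp (B * ∑ j, ‖w j‖ + A * absq w)) * Real.exp (-ν * absq w) := by
        gcongr
        exact hb w
      rw [h1]
      refine h2.trans (le_of_eq ?_)
      rw [mul_assoc, ← Real.exp_add, ← Real.exp_sum]
      congr 1
      simp only [absq_eq, Finset.mul_sum, ← Finset.sum_add_distrib]
      congr 1
      apply Finset.sum_congr rfl
      intro j _
      ring
    -- split off the first coordinate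
    have hmp := MeasureTheory.volume_preserving_piFinSuccAbove (fun _ : Fin (n + 1) => ℂ) 0
    set e := MeasurableEquiv.piFinSuccAbove (fun _ : Fin (n + 1) => ℂ) 0 with he
    have hsymm : ∀ p : ℂ × (Fin n → ℂ), e.symm p = Fin.cons p.1 p.2 := by
      intro p
      rw [he]
      rw [MeasurableEquiv.piFinSuccAbove_symm_apply]
      exact Fin.insertNth_zero' p.1 p.2
    have hstep1 : ∫ w : Fin (n + 1) → ℂ, F w = ∫ p : ℂ × (Fin n → ℂ), F (e.symm p) :=
      (MeasurePreserving.integral_comp hmp.symm e.symm.measurableEmbedding F).symm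
    have hint2 : Integrable (fun p : ℂ × (Fin n → ℂ) => F (e.symm p)) :=
      (MeasurePreserving.integrable_comp_emb hmp.symm e.symm.measurableEmbedding).2 hFint
    rw [hstep1]
    rw [Measure.volume_eq_prod] at hint2 ⊢
    rw [MeasureTheory.integral_prod _ hint2]
    -- inner integral via IH
    have hinner : ∀ x : ℂ, (∫ y : Fin n → ℂ, F (e.symm (x, y)))
        = ((((π / ν) ^ n : ℝ) : ℂ) * h (Fin.cons x 0)) * ((Real.exp (-ν * ‖x‖ ^ 2) : ℝ) : ℂ) := by
      intro x
      have hx : ∀ y : Fin n → ℂ, F (e.symm (x, y))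
          = (h (Fin.cons x y) * ((Real.exp (-ν * absq y) : ℝ) : ℂ))
            * ((Real.exp (-ν * ‖x‖ ^ 2) : ℝ) : ℂ) := by
        intro y
        rw [hsymm, hF]
        simp only
        rw [absq_cons, mul_assoc, ← Complex.ofReal_mul, ← Real.exp_add]
        congr 2
        ring
      simp only [hx]
      rw [MeasureTheory.integral_mul_const]
      congr 1
      exact IH (C * Real.exp (B * ‖x‖ + A * ‖x‖ ^ 2)) (fun y => h (Fin.cons x y))
        (hd.comp (cons_diff x))
        (fun y => by
          have := hb (Fin.cons x y)
          rw [sum_norm_cons, absq_cons] at this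
          refine this.trans (le_of_eq ?_)
          rw [mul_assoc, ← Real.exp_add]
          congr 2
          ring)
    simp only [hinner]
    -- outer integral via mean1
    have houter := mean1 ν A B (|((π / ν) ^ n : ℝ)| * C) hν hA
      (fun x => (((π / ν) ^ n : ℝ) : ℂ) * h (Fin.cons x 0))
      ((hd.comp cons_diff1).const_mul _)
      (fun x => by
        have := hb (Fin.cons x (0 : Fin n → ℂ))
        rw [sum_norm_cons, absq_cons] at this
        simp only [norm_mul, Complex.norm_real, Real.norm_eq_abs]
        calc |((π / ν) ^ n : ℝ)| * ‖h (Fin.cons x 0)‖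
            ≤ |((π / ν) ^ n : ℝ)| * (C * Real.exp (B * (‖x‖ + ∑ j, ‖(0 : Fin n → ℂ) j‖)
              + A * (‖x‖ ^ 2 + absq (0 : Fin n → ℂ)))) := by gcongr
          _ = |((π / ν) ^ n : ℝ)| * C * Real.exp (B * ‖x‖ + A * ‖x‖ ^ 2) := by
              rw [mul_assoc]
              congr 2
              simp [absq]
          )
    rw [houter]
    simp only [cons_zero_zero]
    push_cast
    ring





lemma herm_zero_left {n : ℕ} (z : Fin n → ℂ) : herm 0 z = 0 := by simp [herm]

lemma absq_coe {n : ℕ} (v : Fin n → ℂ) : ((absq v : ℝ) : ℂ) = herm v v := by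
  unfold absq herm
  rw [Complex.ofReal_sum]
  exact Finset.sum_congr rfl fun j _ => (Complex.mul_conj _).symm

lemma herm_add_left {n : ℕ} (u v w : Fin n → ℂ) :
    herm (u + v) w = herm u w + herm v w := by
  simp [herm, add_mul, Finset.sum_add_distrib]

lemma herm_add_right {n : ℕ} (u v w : Fin n → ℂ) :
    herm u (v + w) = herm u v + herm u w := by
  simp [herm, map_add, mul_add, Finset.sum_add_distrib]

lemma herm_diff_left {n : ℕ} (z : Fin n → ℂ) :
    Differentiable ℂ (fun w : Fin n → ℂ => herm w z) := by
  unfold herm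
  apply Differentiable.fun_sum
  intro j _
  exact (differentiable_pi.1 differentiable_id j).mul_const _


/-- Bargmann–Fock reproducing formula for entire functions of growth O(e^{(ν/2)|z|²}). -/
theorem stmt_7 {n : ℕ} (ν : ℝ) (hν : 0 < ν) (g : (Fin n → ℂ) → ℂ)
    (hg : Differentiable ℂ g) (C : ℝ)
    (hgrow : ∀ z, ‖g z‖ ≤ C * Real.exp (ν / 2 * absq z)) :
    ∀ z : Fin n → ℂ, g z = (((ν / Real.pi) ^ n : ℝ) : ℂ) *
      ∫ w : Fin n → ℂ,
        Complex.exp ((ν : ℂ) * herm z w) * g w * ((Real.exp (-ν * absq w) : ℝ) : ℂ) := by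

  intro z
  set M : ℝ := 1 + ∑ j, ‖z j‖ with hMdef
  have hM : ∀ j, ‖z j‖ ≤ M := by
    intro j
    have h1 : ‖z j‖ ≤ ∑ i, ‖z i‖ :=
      Finset.single_le_sum (fun i _ => norm_nonneg _) (Finset.mem_univ j)
    rw [hMdef]; linarith
  set hz : (Fin n → ℂ) → ℂ :=
    fun w => g (w + z) * Complex.exp (-(ν:ℂ) * herm w z) with hhz
  have hzd : Differentiable ℂ hz := by
    apply Differentiable.mul
    · exact hg.comp (differentiable_id.add_const z)
    · exact Complex.differentiable_exp.comp ((herm_diff_left z).const_mul _)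
  have hbz : ∀ w, ‖hz w‖ ≤ (C * Real.exp (ν/2 * absq z)) *
      Real.exp ((2*ν*M) * ∑ j, ‖w j‖ + (ν/2) * absq w) := by
    intro w
    set s : ℝ := ∑ j, ‖w j‖ with hs
    set t : ℝ := ∑ j, ‖w j‖ * ‖z j‖ with ht
    have ht0 : 0 ≤ t := Finset.sum_nonneg fun j _ => by positivity
    have hs0 : 0 ≤ s := Finset.sum_nonneg fun j _ => norm_nonneg _
    have e1 : ‖Complex.exp (-(ν:ℂ) * herm w z)‖ ≤ Real.exp (ν * t) := by
      rw [Complex.norm_exp]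
      apply Real.exp_le_exp.2
      have hre : ((-(ν:ℂ)) * herm w z).re = -ν * (herm w z).re := by
        rw [show (-(ν:ℂ)) = ((-ν : ℝ) : ℂ) by push_cast; ring, Complex.re_ofReal_mul]
      rw [hre]
      have habs : |(herm w z).re| ≤ t := by
        rw [herm, Complex.re_sum]
        apply (Finset.abs_sum_le_sum_abs _ _).trans
        apply Finset.sum_le_sum
        intro j _
        calc |(w j * (starRingEnd ℂ) (z j)).re| ≤ ‖w j * (starRingEnd ℂ) (z j)‖ :=
              Complex.abs_re_le_norm _
          _ = ‖w j‖ * ‖z j‖ := by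
              rw [norm_mul, Complex.norm_conj]
      nlinarith [neg_abs_le ((herm w z).re), hν.le]
    have e2 : absq (w + z) ≤ absq w + 2 * t + absq z := by
      simp only [absq_eq, ht]
      have hptw : ∀ j, ‖(w + z) j‖ ^ 2 ≤ ‖w j‖ ^ 2 + 2 * (‖w j‖ * ‖z j‖) + ‖z j‖ ^ 2 := by
        intro j
        have h4 : ‖(w + z) j‖ ≤ ‖w j‖ + ‖z j‖ := by
          rw [Pi.add_apply]; exact norm_add_le _ _
        nlinarith [norm_nonneg ((w + z) j), norm_nonneg (w j), norm_nonneg (z j)]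
      calc ∑ j, ‖(w + z) j‖ ^ 2 ≤ ∑ j, (‖w j‖ ^ 2 + 2 * (‖w j‖ * ‖z j‖) + ‖z j‖ ^ 2) :=
            Finset.sum_le_sum fun j _ => hptw j
        _ = ∑ j, ‖w j‖ ^ 2 + 2 * ∑ j, ‖w j‖ * ‖z j‖ + ∑ j, ‖z j‖ ^ 2 := by
            rw [Finset.sum_add_distrib, Finset.sum_add_distrib, ← Finset.mul_sum]
    have e3 : t ≤ M * s := by
      rw [ht, hs, Finset.mul_sum]
      apply Finset.sum_le_sum
      intro j _
      calc ‖w j‖ * ‖z j‖ ≤ ‖w j‖ * M := by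
            have := hM j; nlinarith [norm_nonneg (w j)]
        _ = M * ‖w j‖ := mul_comm _ _
    calc ‖hz w‖ = ‖g (w + z)‖ * ‖Complex.exp (-(ν:ℂ) * herm w z)‖ := norm_mul _ _
      _ ≤ (C * Real.exp (ν/2 * absq (w + z))) * Real.exp (ν * t) := by
          apply mul_le_mul (hgrow _) e1 (norm_nonneg _)
          have hC : 0 ≤ C := by
            have := (norm_nonneg (g 0)).trans (hgrow 0)
            simpa [absq] using this
          positivity
      _ ≤ (C * Real.exp (ν/2 * absq z)) * Real.exp ((2*ν*M) * s + (ν/2) * absq w) := by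
          have hC : 0 ≤ C := by
            have := (norm_nonneg (g 0)).trans (hgrow 0)
            simpa [absq] using this
          rw [mul_assoc, mul_assoc, ← Real.exp_add, ← Real.exp_add]
          apply mul_le_mul_of_nonneg_left _ hC
          apply Real.exp_le_exp.2
          have hMul := mul_le_mul_of_nonneg_left e2 (show (0:ℝ) ≤ ν/2 by linarith)
          have hMul2 := mul_le_mul_of_nonneg_left e3 hν.le
          ring_nf at hMul hMul2 ⊢
          linarith
  have key := meanN ν (ν/2) (2*ν*M) hν (by linarith) n (C * Real.exp (ν/2 * absq z)) hz hzd hbz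
  have hz0 : hz 0 = g z := by
    rw [hhz]
    simp [herm_zero_left]
  have hcov : (∫ w : Fin n → ℂ,
        Complex.exp ((ν : ℂ) * herm z w) * g w * ((Real.exp (-ν * absq w) : ℝ) : ℂ))
      = ∫ w : Fin n → ℂ, hz w * ((Real.exp (-ν * absq w) : ℝ) : ℂ) := by
    rw [← integral_add_right_eq_self (fun w : Fin n → ℂ =>
      Complex.exp ((ν : ℂ) * herm z w) * g w * ((Real.exp (-ν * absq w) : ℝ) : ℂ)) z]
    congr 1
    funext u
    simp only [hhz]
    have e : ((ν:ℂ) * herm z (u + z)) + ((-ν * absq (u + z) : ℝ) : ℂ)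
        = (-(ν:ℂ) * herm u z) + ((-ν * absq u : ℝ) : ℂ) := by
      push_cast
      rw [absq_coe, absq_coe, herm_add_right, herm_add_left, herm_add_right, herm_add_right]
      ring
    have hmulexp : Complex.exp ((ν:ℂ) * herm z (u + z)) * ((Real.exp (-ν * absq (u + z)) : ℝ) : ℂ)
        = Complex.exp (-(ν:ℂ) * herm u z) * ((Real.exp (-ν * absq u) : ℝ) : ℂ) := by
      rw [Complex.ofReal_exp, Complex.ofReal_exp, ← Complex.exp_add, ← Complex.exp_add, e]
    linear_combination g (u + z) * hmulexp
  rw [hcov, key, hz0]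
  have hone : ((ν / Real.pi) ^ n * (π / ν) ^ n : ℝ) = 1 := by
    rw [← mul_pow]
    rw [show ν / Real.pi * (π / ν) = 1 by field_simp]
    simp
  rw [← mul_assoc, ← Complex.ofReal_mul, hone, Complex.ofReal_one, one_mul]
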